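/- If x* is an optimal fractional solution of the complex-demand LP (|Σ s_{k,j} x*_{k,j}|-constraints with capacities C_t, arguments of all demands in [0, φ], φ ≤ π/2), then the scaled vector x̃_{k,j} = cos(φ/2) · x*_{k,j} is feasible for the real-valued LP with the same capacities, i.e. Σ_{k,j: t∈T_j} |s_{k,j}| x̃_{k,j} ≤ C_t for all t. Consequently OPT*_{bag} ≥ cos(φ/2) · OPT*_{complex}. -/

import Mathlib

theorem rot_re (z : ℂ) (θ : ℝ) :
    (Complex.exp (-θ * Complex.I) * z).re = ‖z‖ * Real.cos (z.arg - θ) := by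
  conv_lhs => rw [← Complex.norm_mul_exp_arg_mul_I z]
  rw [mul_comm, mul_assoc, ← Complex.exp_add, ← add_mul]
  have : (↑z.arg + -↑θ : ℂ) = ((z.arg - θ : ℝ) : ℂ) := by push_cast; ring
  rw [this, Complex.re_ofReal_mul, Complex.exp_ofReal_mul_I_re]

theorem scaled_lp_feasibility (n m N : ℕ) (user : Fin N → Fin n) (s : Fin N → ℂ)
    (u : Fin N → ℝ) (T : Fin N → Finset (Fin m)) (C : Fin m → ℝ) (φ : ℝ)
    (hu : ∀ j, 0 < u j)
    (hφ0 : 0 ≤ φ) (hφ : φ ≤ Real.pi / 2)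
    (harg : ∀ j, 0 ≤ (s j).arg ∧ (s j).arg ≤ φ)
    (xs : Fin N → ℝ)
    (hx : ∀ j, 0 ≤ xs j ∧ xs j ≤ 1)
    (hbag : ∀ k, ∑ j ∈ Finset.univ.filter (fun j => user j = k), xs j ≤ 1)
    (hcomplex : ∀ t, ‖∑ j ∈ Finset.univ.filter (fun j => t ∈ T j),
        (xs j : ℂ) * s j‖ ≤ C t)
    (hopt : ∀ y : Fin N → ℝ,
        (∀ j, 0 ≤ y j ∧ y j ≤ 1) →
        (∀ k, ∑ j ∈ Finset.univ.filter (fun j => user j = k), y j ≤ 1) →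
        (∀ t, ‖∑ j ∈ Finset.univ.filter (fun j => t ∈ T j),
            (y j : ℂ) * s j‖ ≤ C t) →
        ∑ j, u j * y j ≤ ∑ j, u j * xs j) :
    (∀ j, 0 ≤ Real.cos (φ / 2) * xs j ∧ Real.cos (φ / 2) * xs j ≤ 1) ∧
    (∀ k, ∑ j ∈ Finset.univ.filter (fun j => user j = k),
        Real.cos (φ / 2) * xs j ≤ 1) ∧
    (∀ t, ∑ j ∈ Finset.univ.filter (fun j => t ∈ T j),
        ‖s j‖ * (Real.cos (φ / 2) * xs j) ≤ C t) ∧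
    (∑ j, u j * (Real.cos (φ / 2) * xs j) = Real.cos (φ / 2) * ∑ j, u j * xs j) := by
  have hpi := Real.pi_pos
  have hc0 : 0 ≤ Real.cos (φ / 2) :=
    Real.cos_nonneg_of_mem_Icc ⟨by linarith, by linarith⟩
  have hc1 : Real.cos (φ / 2) ≤ 1 := Real.cos_le_one _
  refine ⟨?_, ?_, ?_, ?_⟩
  · intro j
    refine ⟨mul_nonneg hc0 (hx j).1, ?_⟩
    calc Real.cos (φ / 2) * xs j ≤ 1 * 1 :=
          mul_le_mul hc1 (hx j).2 (hx j).1 zero_le_one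
      _ = 1 := one_mul 1
  · intro k
    rw [← Finset.mul_sum]
    calc Real.cos (φ / 2) * ∑ j ∈ Finset.univ.filter (fun j => user j = k), xs j
        ≤ 1 * 1 := mul_le_mul hc1 (hbag k)
          (Finset.sum_nonneg fun j _ => (hx j).1) zero_le_one
      _ = 1 := one_mul 1
  · intro t
    set θ := φ / 2 with hθ
    set F := Finset.univ.filter (fun j => t ∈ T j) with hF
    have key : ∀ j ∈ F, ‖s j‖ * (Real.cos θ * xs j)
        ≤ (Complex.exp (-θ * Complex.I) * ((xs j : ℂ) * s j)).re := by
      intro j _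
      rw [rot_re]
      rcases eq_or_lt_of_le (hx j).1 with h0 | hpos
      · simp [← h0]
      · have habs : ‖(xs j : ℂ) * s j‖ = xs j * ‖s j‖ := by
          rw [norm_mul, Complex.norm_real, Real.norm_eq_abs, abs_of_pos hpos]
        have harg' : ((xs j : ℂ) * s j).arg = (s j).arg := Complex.arg_real_mul _ hpos
        rw [habs, harg']
        have hcos : Real.cos θ ≤ Real.cos ((s j).arg - θ) := by
          rw [← Real.cos_abs ((s j).arg - θ)]
          apply Real.cos_le_cos_of_nonneg_of_le_pi (abs_nonneg _) (by rw [hθ]; linarith)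
          rw [abs_le]
          exact ⟨by linarith [(harg j).1], by linarith [(harg j).2]⟩
        have hs0 : 0 ≤ ‖s j‖ := norm_nonneg _
        nlinarith [mul_le_mul_of_nonneg_left hcos (mul_nonneg (le_of_lt hpos) hs0)]
    calc ∑ j ∈ F, ‖s j‖ * (Real.cos θ * xs j)
        ≤ ∑ j ∈ F, (Complex.exp (-θ * Complex.I) * ((xs j : ℂ) * s j)).re :=
          Finset.sum_le_sum key
      _ = (Complex.exp (-θ * Complex.I) * ∑ j ∈ F, (xs j : ℂ) * s j).re := by
          rw [Finset.mul_sum, Complex.re_sum]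
      _ ≤ ‖Complex.exp (-θ * Complex.I) * ∑ j ∈ F, (xs j : ℂ) * s j‖ :=
          Complex.re_le_norm _
      _ = ‖∑ j ∈ F, (xs j : ℂ) * s j‖ := by
          rw [norm_mul]
          have : (-θ : ℂ) * Complex.I = ((-θ : ℝ) : ℂ) * Complex.I := by push_cast; ring
          rw [this, Complex.norm_exp_ofReal_mul_I, one_mul]
      _ ≤ C t := hcomplex t
  · rw [Finset.mul_sum]
    exact Finset.sum_congr rfl fun j _ => by ring
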